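/- Let μ, λ be partitions of n, u a standard μ-tableau, t a standard λ-tableau, and suppose i is a strong descent of both u and t (i.e., col_u(i) > col_u(i+1) and col_t(i) > col_t(i+1)). Then u ≤ t in the extended dominance order if and only if s_i·u ≤ s_i·t, where s_i·t is the tableau obtained by swapping the entries i and i+1. -/

import Mathlib

/-- Partial sum `λ₁ + ⋯ + λ_k` of a 1-indexed sequence of parts. -/
def psum (lam : ℕ → ℕ) (k : ℕ) : ℕ := ∑ i ∈ Finset.Icc 1 k, lam i

/-- `lam` is a composition of `n` (1-indexed parts, extended by zeros). -/
def IsComp (n : ℕ) (lam : ℕ → ℕ) : Prop :=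
  lam 0 = 0 ∧ ∃ N, (∀ i, N < i → lam i = 0) ∧ psum lam N = n

/-- `lam` is a partition of `n` (weakly decreasing parts). -/
def IsPartition (n : ℕ) (lam : ℕ → ℕ) : Prop :=
  IsComp n lam ∧ ∀ i j, 1 ≤ i → i ≤ j → lam j ≤ lam i

/-- Dominance order in the paper's (column) convention: `lam` dominates `mu`
(written `mu ≤ lam`) iff every partial sum of `lam` is at most the
corresponding partial sum of `mu`. -/
def Dominates (lam mu : ℕ → ℕ) : Prop := ∀ k, psum lam k ≤ psum mu k

/-- Row index of the box containing the entry `k`. -/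
def rowT (p : ℕ → ℕ × ℕ) (k : ℕ) : ℕ := (p k).1
/-- Column index of the box containing the entry `k`. -/
def colT (p : ℕ → ℕ × ℕ) (k : ℕ) : ℕ := (p k).2

/-- `p` is the position function of a bijective filling of the skew diagram
`[lam] ∖ [mu]` (1-indexed rows and columns, `lam j` boxes in column `j`)
by the entries `a+1, …, a+n`. -/
def IsSkewTab (lam mu : ℕ → ℕ) (a n : ℕ) (p : ℕ → ℕ × ℕ) : Prop :=
  (∀ k ∈ Finset.Icc (a+1) (a+n),
      1 ≤ (p k).2 ∧ mu (p k).2 < (p k).1 ∧ (p k).1 ≤ lam (p k).2) ∧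
  (∀ k ∈ Finset.Icc (a+1) (a+n), ∀ l ∈ Finset.Icc (a+1) (a+n), p k = p l → k = l) ∧
  (∀ c : ℕ × ℕ, 1 ≤ c.2 → mu c.2 < c.1 → c.1 ≤ lam c.2 →
      ∃ k ∈ Finset.Icc (a+1) (a+n), p k = c)

/-- A straight-shape `lam`-tableau with entries `1, …, n`. -/
def IsTab (lam : ℕ → ℕ) (n : ℕ) (p : ℕ → ℕ × ℕ) : Prop :=
  IsSkewTab lam (fun _ => 0) 0 n p

/-- Entries increase down each column. -/
def ColStd (a n : ℕ) (p : ℕ → ℕ × ℕ) : Prop :=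
  ∀ k ∈ Finset.Icc (a+1) (a+n), ∀ l ∈ Finset.Icc (a+1) (a+n),
    colT p k = colT p l → rowT p k < rowT p l → k < l

/-- Entries increase along each row. -/
def RowStd (a n : ℕ) (p : ℕ → ℕ × ℕ) : Prop :=
  ∀ k ∈ Finset.Icc (a+1) (a+n), ∀ l ∈ Finset.Icc (a+1) (a+n),
    rowT p k = rowT p l → colT p k < colT p l → k < l

/-- Standard skew tableau of shape `lam/mu` with entries `a+1, …, a+n`. -/
def IsStdSkew (lam mu : ℕ → ℕ) (a n : ℕ) (p : ℕ → ℕ × ℕ) : Prop :=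
  IsSkewTab lam mu a n p ∧ ColStd a n p ∧ RowStd a n p

/-- Standard `lam`-tableau with entries `1, …, n`. -/
def IsStd (lam : ℕ → ℕ) (n : ℕ) (p : ℕ → ℕ × ℕ) : Prop :=
  IsStdSkew lam (fun _ => 0) 0 n p

/-- Column standard straight-shape `lam`-tableau. -/
def IsColStdTab (lam : ℕ → ℕ) (n : ℕ) (p : ℕ → ℕ × ℕ) : Prop :=
  IsTab lam n p ∧ ColStd 0 n p

/-- `i ∈ D(p)`: a descent, `col(i) ≥ col(i+1)`. -/
def inD (a n : ℕ) (p : ℕ → ℕ × ℕ) (i : ℕ) : Prop :=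
  a + 1 ≤ i ∧ i + 1 ≤ a + n ∧ colT p (i+1) ≤ colT p i
/-- `i ∈ SD(p)`: a strong descent, `col(i) > col(i+1)`. -/
def inSD (a n : ℕ) (p : ℕ → ℕ × ℕ) (i : ℕ) : Prop :=
  a + 1 ≤ i ∧ i + 1 ≤ a + n ∧ colT p (i+1) < colT p i
/-- `i ∈ WD(p)`: a weak descent, `col(i) = col(i+1)`. -/
def inWD (a n : ℕ) (p : ℕ → ℕ × ℕ) (i : ℕ) : Prop :=
  a + 1 ≤ i ∧ i + 1 ≤ a + n ∧ colT p (i+1) = colT p i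
/-- `i ∈ A(p)`: an ascent, `col(i) < col(i+1)`. -/
def inA (a n : ℕ) (p : ℕ → ℕ × ℕ) (i : ℕ) : Prop :=
  a + 1 ≤ i ∧ i + 1 ≤ a + n ∧ colT p i < colT p (i+1)
/-- `i ∈ SA(p)`: a strong ascent, `row(i) > row(i+1)`. -/
def inSA (a n : ℕ) (p : ℕ → ℕ × ℕ) (i : ℕ) : Prop :=
  a + 1 ≤ i ∧ i + 1 ≤ a + n ∧ rowT p (i+1) < rowT p i

/-- Descent set of a tableau with entries `1, …, n`. -/
def Dset (n : ℕ) (p : ℕ → ℕ × ℕ) : Set ℕ := {i | inD 0 n p i}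

/-- Shape of the restriction of `p` to entries `≤ m`: the number of boxes
of column `j` occupied by entries `≤ m`. -/
def resShape (p : ℕ → ℕ × ℕ) (m j : ℕ) : ℕ :=
  ((Finset.Icc 1 m).filter (fun k => colT p k = j)).card

/-- Extended dominance order on standard tableaux with `n` boxes: `u ≤ t`. -/
def ExtDomLe (n : ℕ) (pu pt : ℕ → ℕ × ℕ) : Prop :=
  ∀ m ∈ Finset.Icc 1 n, Dominates (fun j => resShape pt m j) (fun j => resShape pu m j)

/-- `i` is the restriction number of `(u,t)`: the restrictions to entries `≤ i`
agree, and `i` is maximal with this property. -/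
def RestNum (n : ℕ) (pu pt : ℕ → ℕ × ℕ) (i : ℕ) : Prop :=
  i ≤ n ∧ (∀ k, 1 ≤ k → k ≤ i → pu k = pt k) ∧ (i = n ∨ pu (i+1) ≠ pt (i+1))

/-- `(u,t)` is favourable with restriction number `i`:
`i` lies in the symmetric difference `D(u) ⊕ D(t)`. -/
def Favourable (n : ℕ) (pu pt : ℕ → ℕ × ℕ) (i : ℕ) : Prop :=
  RestNum n pu pt i ∧
    ((inD 0 n pu i ∧ ¬ inD 0 n pt i) ∨ (inD 0 n pt i ∧ ¬ inD 0 n pu i))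

/-- Dual Knuth move of the first kind of index `k` from `u` to `t`,
on standard tableaux of shape `lam`:  `t = s_k u` with
`D(u) ∩ {k-1,k} = {k-1}` and `D(t) ∩ {k-1,k} = {k}`. -/
def DK1 (lam : ℕ → ℕ) (n : ℕ) (pu pt : ℕ → ℕ × ℕ) (k : ℕ) : Prop :=
  IsStd lam n pu ∧ IsStd lam n pt ∧ 2 ≤ k ∧
  (∀ m, pt m = pu (Equiv.swap k (k+1) m)) ∧
  inD 0 n pu (k-1) ∧ ¬ inD 0 n pu k ∧ inD 0 n pt k ∧ ¬ inD 0 n pt (k-1)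

/-- Dual Knuth move of the second kind of index `k` from `u` to `t`:
`t = s_k u` with `D(u) ∩ {k,k+1} = {k+1}` and `D(t) ∩ {k,k+1} = {k}`. -/
def DK2 (lam : ℕ → ℕ) (n : ℕ) (pu pt : ℕ → ℕ × ℕ) (k : ℕ) : Prop :=
  IsStd lam n pu ∧ IsStd lam n pt ∧ k + 2 ≤ n ∧
  (∀ m, pt m = pu (Equiv.swap k (k+1) m)) ∧
  inD 0 n pu (k+1) ∧ ¬ inD 0 n pu k ∧ inD 0 n pt k ∧ ¬ inD 0 n pt (k+1)

/-- A dual Knuth move (of either kind) of index `k` from `u` to `t`. -/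
def DKMove (lam : ℕ → ℕ) (n : ℕ) (pu pt : ℕ → ℕ × ℕ) (k : ℕ) : Prop :=
  DK1 lam n pu pt k ∨ DK2 lam n pu pt k

/-- A paired dual Knuth move: a dual Knuth move of the same kind and the same
index applied simultaneously to both components of a pair. -/
def PairedDKMove (mu lam : ℕ → ℕ) (n : ℕ)
    (a b : (ℕ → ℕ × ℕ) × (ℕ → ℕ × ℕ)) : Prop :=
  ∃ k, (DK1 mu n a.1 b.1 k ∧ DK1 lam n a.2 b.2 k) ∨
       (DK2 mu n a.1 b.1 k ∧ DK2 lam n a.2 b.2 k)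

/-- Paired dual Knuth equivalence: the equivalence relation generated by
paired dual Knuth moves. -/
def PairedDKEquiv (mu lam : ℕ → ℕ) (n : ℕ)
    (a b : (ℕ → ℕ × ℕ) × (ℕ → ℕ × ℕ)) : Prop :=
  Relation.ReflTransGen
    (fun x y => PairedDKMove mu lam n x y ∨ PairedDKMove mu lam n y x) a b

/-- Lexicographic order on same-shape column standard tableaux: `u <_lex t`. -/
def LexLT (n : ℕ) (pu pt : ℕ → ℕ × ℕ) : Prop :=
  ∃ l, 1 ≤ l ∧ l ≤ n ∧ colT pt l < colT pu l ∧
    ∀ m, l < m → m ≤ n → colT pt m = colT pu m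

/-- `w` is a permutation of `[1,n]`, fixing all other natural numbers. -/
def IsPermOf (n : ℕ) (w : ℕ → ℕ) : Prop :=
  (∀ k ∈ Finset.Icc 1 n, w k ∈ Finset.Icc 1 n) ∧
  (∀ k ∈ Finset.Icc 1 n, ∀ l ∈ Finset.Icc 1 n, w k = w l → k = l) ∧
  (∀ k, k ∉ Finset.Icc 1 n → w k = k)

/-- The Coxeter length of `w ∈ S_n`: the number of inversions. -/
def lenInv (n : ℕ) (w : ℕ → ℕ) : ℕ :=
  ((Finset.Icc 1 n ×ˢ Finset.Icc 1 n).filter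
    (fun q => q.1 < q.2 ∧ w q.2 < w q.1)).card

/-- One step of the Bruhat order on `S_n`: `y = (i j) ∘ x` (so `y x⁻¹` is a
reflection) with `l(x) < l(y)`. -/
def BruhatStep (n : ℕ) (x y : ℕ → ℕ) : Prop :=
  lenInv n x < lenInv n y ∧
  ∃ i j, 1 ≤ i ∧ i < j ∧ j ≤ n ∧ ∀ k, y k = Equiv.swap i j (x k)

/-- The Bruhat order on `S_n`. -/
def BruhatLe (n : ℕ) (x y : ℕ → ℕ) : Prop :=
  Relation.ReflTransGen (BruhatStep n) x y

/-- One step of the left weak order on `S_n`: `y = s_i ∘ x` with `l(x) < l(y)`. -/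
def WeakStep (n : ℕ) (x y : ℕ → ℕ) : Prop :=
  lenInv n x < lenInv n y ∧
  ∃ i, 1 ≤ i ∧ i + 1 ≤ n ∧ ∀ k, y k = Equiv.swap i (i+1) (x k)

/-- The left weak order on `S_n`. -/
def WeakLe (n : ℕ) (x y : ℕ → ℕ) : Prop :=
  Relation.ReflTransGen (WeakStep n) x y

/-- `ptau` is (the position function of) the column superstandard tableau
`τ_lam`: column standard, with the columns filled in order from left to right. -/
def IsSuperstandard (lam : ℕ → ℕ) (n : ℕ) (ptau : ℕ → ℕ × ℕ) : Prop :=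
  IsTab lam n ptau ∧ ColStd 0 n ptau ∧
  ∀ k, 1 ≤ k → k + 1 ≤ n → colT ptau k ≤ colT ptau (k+1)

/-- `w = perm(t)`, i.e. `w · τ_lam = t`: for each `k`, the box of `τ_lam`
containing `k` contains `w k` in `t`. -/
def IsPermTab (n : ℕ) (ptau pt : ℕ → ℕ × ℕ) (w : ℕ → ℕ) : Prop :=
  IsPermOf n w ∧ ∀ k ∈ Finset.Icc 1 n, pt (w k) = ptau k

/-- `p` (a standard skew tableau of shape `lam/mu` with entries `a+1, …, a+n`)
is the `(a+1)`-critical tableau: writing `m = a+1`, the entry `m` lies in the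
first nonempty column `i` of the skew diagram, `m+1` lies in column `i+1`,
and the restriction to entries `> m+1` is minimal (no strong descents). -/
def IsCritical (lam mu : ℕ → ℕ) (a n : ℕ) (p : ℕ → ℕ × ℕ) : Prop :=
  IsStdSkew lam mu a n p ∧
  (∀ j, 1 ≤ j → j < colT p (a+1) → lam j ≤ mu j) ∧
  mu (colT p (a+1)) < lam (colT p (a+1)) ∧
  colT p (a+2) = colT p (a+1) + 1 ∧
  ∀ i, a + 3 ≤ i → i + 1 ≤ a + n → colT p i ≤ colT p (i+1)

/-- The box `c` is removable from the diagram of `lam`. -/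
def Removable (lam : ℕ → ℕ) (c : ℕ × ℕ) : Prop :=
  1 ≤ c.2 ∧ c.1 = lam c.2 ∧ lam (c.2 + 1) < c.1

/-- One step of a jeu de taquin slide on a filling `p` with entries `1, …, n`:
the hole moves from `b` to `b'`, where `b'` is the box (below or to the right
of `b`) containing the smaller entry `x` among the occupied candidates, and the
filling is updated by moving `x` into `b`. -/
def SlideStep (n : ℕ) (p : ℕ → ℕ × ℕ) (b : ℕ × ℕ)
    (p' : ℕ → ℕ × ℕ) (b' : ℕ × ℕ) : Prop :=
  ∃ x, 1 ≤ x ∧ x ≤ n ∧ p x = b' ∧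
    (b' = (b.1 + 1, b.2) ∨ b' = (b.1, b.2 + 1)) ∧
    (∀ y, 1 ≤ y → y ≤ n → (p y = (b.1 + 1, b.2) ∨ p y = (b.1, b.2 + 1)) → x ≤ y) ∧
    (∀ y, p' y = if y = x then b else p y)

/-- `lam/mu` is a skew partition of `n`. -/
def IsSkewShape (n : ℕ) (lam mu : ℕ → ℕ) : Prop :=
  (∃ m, IsPartition (m + n) lam ∧ IsPartition m mu) ∧ ∀ j, mu j ≤ lam j

lemma swap_mem_Icc_aux {i m k : ℕ} (h1 : 1 ≤ i) (hk : k ∈ Finset.Icc 1 m)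
    (hm : m < i ∨ i + 1 ≤ m) : Equiv.swap i (i+1) k ∈ Finset.Icc 1 m := by
  simp only [Finset.mem_Icc] at *
  rcases eq_or_ne k i with rfl | hki
  · rw [Equiv.swap_apply_left]; omega
  rcases eq_or_ne k (i+1) with rfl | hki1
  · rw [Equiv.swap_apply_right]; omega
  · rw [Equiv.swap_apply_of_ne_of_ne hki hki1]; omega

lemma resShape_swap_eq (p ps : ℕ → ℕ × ℕ) (i : ℕ) (h1 : 1 ≤ i)
    (hs : ∀ m, ps m = p (Equiv.swap i (i+1) m)) (m : ℕ) (hm : m < i ∨ i+1 ≤ m)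
    (j : ℕ) : resShape ps m j = resShape p m j := by
  unfold resShape
  apply Finset.card_bij (fun k _ => Equiv.swap i (i+1) k)
  · intro a ha
    simp only [Finset.mem_filter] at ha ⊢
    refine ⟨swap_mem_Icc_aux h1 ha.1 hm, ?_⟩
    have := ha.2
    rwa [colT, hs] at this
  · intro a _ b _ hab
    exact (Equiv.swap i (i+1)).injective hab
  · intro b hb
    simp only [Finset.mem_filter] at hb
    refine ⟨Equiv.swap i (i+1) b, ?_, ?_⟩
    · simp only [Finset.mem_filter]
      refine ⟨swap_mem_Icc_aux h1 hb.1 hm, ?_⟩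
      rw [colT, hs, Equiv.swap_apply_self]
      exact hb.2
    · rw [Equiv.swap_apply_self]

lemma resShape_succ (p : ℕ → ℕ × ℕ) (m j : ℕ) :
    resShape p (m+1) j = resShape p m j + if colT p (m+1) = j then 1 else 0 := by
  unfold resShape
  have h : Finset.Icc 1 (m+1) = insert (m+1) (Finset.Icc 1 m) := by
    ext x; simp only [Finset.mem_Icc, Finset.mem_insert]; omega
  rw [h, Finset.filter_insert]
  split_ifs with hc
  · rw [Finset.card_insert_of_notMem (by simp [Finset.mem_Icc])]
  · omega

lemma psum_add_chi (f : ℕ → ℕ) (c k : ℕ) (hc : 1 ≤ c) :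
    psum (fun j => f j + if c = j then 1 else 0) k
      = psum f k + if c ≤ k then 1 else 0 := by
  unfold psum
  rw [Finset.sum_add_distrib, Finset.sum_ite_eq]
  simp only [Finset.mem_Icc]
  congr 1
  split_ifs <;> omega

lemma psum_resShape_succ (p : ℕ → ℕ × ℕ) (m k : ℕ) (hc : 1 ≤ colT p (m+1)) :
    psum (fun j => resShape p (m+1) j) k
      = psum (fun j => resShape p m j) k + if colT p (m+1) ≤ k then 1 else 0 := by
  calc psum (fun j => resShape p (m+1) j) k
      = psum (fun j => resShape p m j + if colT p (m+1) = j then 1 else 0) k := by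
        unfold psum; exact Finset.sum_congr rfl (fun j _ => resShape_succ p m j)
    _ = _ := psum_add_chi _ _ _ hc

lemma step_aux (P Q cu cu' ct ct' k : ℕ)
    (hord : (cu' < cu ∧ ct' < ct) ∨ (cu < cu' ∧ ct < ct'))
    (h0 : Q ≤ P)
    (h2 : Q + (if ct ≤ k then 1 else 0) + (if ct' ≤ k then 1 else 0)
        ≤ P + (if cu ≤ k then 1 else 0) + (if cu' ≤ k then 1 else 0))
    (h1 : Q + (if ct ≤ k then 1 else 0) ≤ P + (if cu ≤ k then 1 else 0)) :
    Q + (if ct' ≤ k then 1 else 0) ≤ P + (if cu' ≤ k then 1 else 0) := by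
  split_ifs at * <;> omega

lemma extDom_swap_mono (n i : ℕ) (pu pt psu pst : ℕ → ℕ × ℕ)
    (h1 : 1 ≤ i) (h2 : i + 1 ≤ n)
    (hsu : ∀ m, psu m = pu (Equiv.swap i (i+1) m))
    (hst : ∀ m, pst m = pt (Equiv.swap i (i+1) m))
    (hcu1 : 1 ≤ colT pu i) (hcu2 : 1 ≤ colT pu (i+1))
    (hct1 : 1 ≤ colT pt i) (hct2 : 1 ≤ colT pt (i+1))
    (hord : (colT pu (i+1) < colT pu i ∧ colT pt (i+1) < colT pt i)
          ∨ (colT pu i < colT pu (i+1) ∧ colT pt i < colT pt (i+1)))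
    (h : ExtDomLe n pu pt) : ExtDomLe n psu pst := by
  intro m hm k
  rcases eq_or_ne m i with heq | hmi
  · -- m = i
    subst heq
    obtain ⟨i', rfl⟩ : ∃ j, m = j + 1 := ⟨m - 1, by omega⟩
    have hQP : psum (fun j => resShape pt i' j) k ≤ psum (fun j => resShape pu i' j) k := by
      rcases Nat.eq_zero_or_pos i' with rfl | hpos
      · simp [psum, resShape]
      · exact h i' (Finset.mem_Icc.mpr ⟨hpos, by omega⟩) k
    have hmem1 : i' + 1 ∈ Finset.Icc 1 n := Finset.mem_Icc.mpr ⟨by omega, by omega⟩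
    have hmem2 : i' + 2 ∈ Finset.Icc 1 n := Finset.mem_Icc.mpr ⟨by omega, by omega⟩
    have hu1 := h (i' + 1) hmem1 k
    have hu2 := h (i' + 2) hmem2 k
    rw [psum_resShape_succ pu i' k hcu1, psum_resShape_succ pt i' k hct1] at hu1
    rw [show i' + 2 = (i' + 1) + 1 from rfl] at hu2
    rw [psum_resShape_succ pu (i'+1) k hcu2, psum_resShape_succ pt (i'+1) k hct2,
        psum_resShape_succ pu i' k hcu1, psum_resShape_succ pt i' k hct1] at hu2
    -- rewrite goal
    have hcsu : colT psu (i'+1) = colT pu (i'+2) := by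
      rw [colT, colT, hsu, Equiv.swap_apply_left]
    have hcst : colT pst (i'+1) = colT pt (i'+2) := by
      rw [colT, colT, hst, Equiv.swap_apply_left]
    have hgu : psum (fun j => resShape psu (i'+1) j) k
        = psum (fun j => resShape pu i' j) k
          + if colT pu (i'+2) ≤ k then 1 else 0 := by
      rw [psum_resShape_succ psu i' k (by rw [hcsu]; exact hcu2)]
      rw [hcsu]
      congr 1
      unfold psum
      exact Finset.sum_congr rfl fun j _ =>
        resShape_swap_eq pu psu (i'+1) (by omega) hsu i' (by omega) j
    have hgt : psum (fun j => resShape pst (i'+1) j) k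
        = psum (fun j => resShape pt i' j) k
          + if colT pt (i'+2) ≤ k then 1 else 0 := by
      rw [psum_resShape_succ pst i' k (by rw [hcst]; exact hct2)]
      rw [hcst]
      congr 1
      unfold psum
      exact Finset.sum_congr rfl fun j _ =>
        resShape_swap_eq pt pst (i'+1) (by omega) hst i' (by omega) j
    rw [hgu, hgt]
    have e : i'+1+1 = i'+2 := by omega
    rw [e] at hu2
    exact step_aux _ _ _ _ _ _ _ hord hQP (by omega) hu1
  · -- m ≠ i
    have hm' : m < i ∨ i + 1 ≤ m := by omega
    have e1 : psum (fun j => resShape pst m j) k = psum (fun j => resShape pt m j) k := by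
      unfold psum
      exact Finset.sum_congr rfl fun j _ => resShape_swap_eq pt pst i h1 hst m hm' j
    have e2 : psum (fun j => resShape psu m j) k = psum (fun j => resShape pu m j) k := by
      unfold psum
      exact Finset.sum_congr rfl fun j _ => resShape_swap_eq pu psu i h1 hsu m hm' j
    rw [e1, e2]
    exact h m hm k

/-- the extended dominance order is preserved by simultaneously
swapping `i` and `i+1` when `i` is a strong descent of both tableaux. -/
theorem extDom_iff_swap (n : ℕ) (mu lam : ℕ → ℕ)
    (hmu : IsPartition n mu) (hlam : IsPartition n lam)
    (pu pt psu pst : ℕ → ℕ × ℕ)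
    (hu : IsStd mu n pu) (ht : IsStd lam n pt)
    (i : ℕ) (hiu : inSD 0 n pu i) (hit : inSD 0 n pt i)
    (hsu : ∀ m, psu m = pu (Equiv.swap i (i+1) m))
    (hst : ∀ m, pst m = pt (Equiv.swap i (i+1) m)) :
    ExtDomLe n pu pt ↔ ExtDomLe n psu pst := by
  obtain ⟨hi1, hin, hdu⟩ := hiu
  obtain ⟨-, -, hdt⟩ := hit
  have hi1' : 1 ≤ i := by omega
  have hin' : i + 1 ≤ n := by omega
  have hmemi : i ∈ Finset.Icc (0+1) (0+n) := Finset.mem_Icc.mpr ⟨by omega, by omega⟩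
  have hmemi1 : i + 1 ∈ Finset.Icc (0+1) (0+n) := Finset.mem_Icc.mpr ⟨by omega, by omega⟩
  have hcu1 : 1 ≤ colT pu i := (hu.1.1 i hmemi).1
  have hcu2 : 1 ≤ colT pu (i+1) := (hu.1.1 (i+1) hmemi1).1
  have hct1 : 1 ≤ colT pt i := (ht.1.1 i hmemi).1
  have hct2 : 1 ≤ colT pt (i+1) := (ht.1.1 (i+1) hmemi1).1
  have hsu' : ∀ m, pu m = psu (Equiv.swap i (i+1) m) := by
    intro m; rw [hsu, Equiv.swap_apply_self]
  have hst' : ∀ m, pt m = pst (Equiv.swap i (i+1) m) := by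
    intro m; rw [hst, Equiv.swap_apply_self]
  have hcsu1 : colT psu i = colT pu (i+1) := by
    rw [colT, colT, hsu, Equiv.swap_apply_left]
  have hcsu2 : colT psu (i+1) = colT pu i := by
    rw [colT, colT, hsu, Equiv.swap_apply_right]
  have hcst1 : colT pst i = colT pt (i+1) := by
    rw [colT, colT, hst, Equiv.swap_apply_left]
  have hcst2 : colT pst (i+1) = colT pt i := by
    rw [colT, colT, hst, Equiv.swap_apply_right]
  constructor
  · exact extDom_swap_mono n i pu pt psu pst hi1' hin' hsu hst hcu1 hcu2 hct1 hct2
      (Or.inl ⟨hdu, hdt⟩)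
  · intro h
    exact extDom_swap_mono n i psu pst pu pt hi1' hin' hsu' hst'
      (by rw [hcsu1]; exact hcu2) (by rw [hcsu2]; exact hcu1)
      (by rw [hcst1]; exact hct2) (by rw [hcst2]; exact hct1)
      (Or.inr ⟨by rw [hcsu1, hcsu2]; exact hdu, by rw [hcst1, hcst2]; exact hdt⟩) h
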